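/- For every N ≥ 1 and every x ∈ ℂ with |x| = 1, |Σ_{n=1}^N ε_n x^n| ≤ 2(1 + √2)·N^{1/2} (the root-N property). -/

import Mathlib

open Polynomial Finset


lemma coeff_helper (a : ℂ) (m n : ℕ) (q : Polynomial ℂ) :
    (Polynomial.C a * Polynomial.X ^ m * q).coeff n =
      if m ≤ n then a * q.coeff (n - m) else 0 := by
  rw [mul_right_comm, Polynomial.coeff_mul_X_pow']
  split_ifs <;> simp [Polynomial.coeff_C_mul]

lemma sum_to_eval (p : Polynomial ℂ) (N : ℕ) (h0 : p.coeff 0 = 0)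
    (hd : p.natDegree ≤ N) (x : ℂ) :
    ∑ n ∈ Icc 1 N, p.coeff n * x ^ n = p.eval x := by
  rw [Polynomial.eval_eq_sum_range' (lt_of_le_of_lt hd (Nat.lt_succ_self N)),
    Finset.sum_range_succ', ← Finset.Ico_add_one_right_eq_Icc, Finset.sum_Ico_eq_sum_range]
  simp [h0, add_comm]

/-- The pair of polynomial sequences `(P_k, Q_k)` defined by `P_0 = Q_0 = X` and
`P_{k+1} = P_k + σ_k x^{2^k} Q_k`, `Q_{k+1} = P_k - σ_k x^{2^k} Q_k`. -/
noncomputable def PQ (σ : ℕ → ℤ) : ℕ → Polynomial ℂ × Polynomial ℂ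
  | 0 => (Polynomial.X, Polynomial.X)
  | k + 1 =>
      ((PQ σ k).1 + Polynomial.C ((σ k : ℂ)) * Polynomial.X ^ 2 ^ k * (PQ σ k).2,
       (PQ σ k).1 - Polynomial.C ((σ k : ℂ)) * Polynomial.X ^ 2 ^ k * (PQ σ k).2)

lemma PQ_coeff0 (σ : ℕ → ℤ) (k : ℕ) :
    (PQ σ k).1.coeff 0 = 0 ∧ (PQ σ k).2.coeff 0 = 0 := by
  induction k with
  | zero => simp [PQ]
  | succ k ih =>
    have h : (Polynomial.C ((σ k : ℂ)) * Polynomial.X ^ 2 ^ k * (PQ σ k).2).coeff 0 = 0 := by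
      rw [coeff_helper, if_neg]
      exact Nat.not_le.mpr (Nat.pow_pos (by norm_num))
    simp only [PQ, Polynomial.coeff_add, Polynomial.coeff_sub, h, ih.1]
    norm_num

lemma PQ_natDegree (σ : ℕ → ℤ) (k : ℕ) :
    (PQ σ k).1.natDegree ≤ 2 ^ k ∧ (PQ σ k).2.natDegree ≤ 2 ^ k := by
  induction k with
  | zero => simp [PQ, Polynomial.natDegree_X]
  | succ k ih =>
    have h : (Polynomial.C ((σ k : ℂ)) * Polynomial.X ^ 2 ^ k * (PQ σ k).2).natDegree
        ≤ 2 ^ (k + 1) := by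
      refine Polynomial.natDegree_mul_le.trans ?_
      have h1 : (Polynomial.C ((σ k : ℂ)) * Polynomial.X ^ (2 ^ k) : Polynomial ℂ).natDegree
          ≤ 2 ^ k := by
        refine Polynomial.natDegree_mul_le.trans ?_
        simp [Polynomial.natDegree_C]
      have h2 := ih.2
      have : (2:ℕ) ^ (k+1) = 2 ^ k + 2 ^ k := by ring
      omega
    have h2 : (2:ℕ) ^ k ≤ 2 ^ (k+1) := Nat.pow_le_pow_right (by norm_num) (Nat.le_succ k)
    constructor
    · exact (Polynomial.natDegree_add_le _ _).trans (max_le (le_trans ih.1 h2) h)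
    · exact (Polynomial.natDegree_sub_le _ _).trans (max_le (le_trans ih.1 h2) h)

lemma PQ_coeff_low (σ : ℕ → ℤ) (k n : ℕ) (hn : n ≤ 2 ^ k) :
    (PQ σ (k+1)).1.coeff n = (PQ σ k).1.coeff n ∧
    (PQ σ (k+1)).2.coeff n = (PQ σ k).1.coeff n := by
  have h : (Polynomial.C ((σ k : ℂ)) * Polynomial.X ^ 2 ^ k * (PQ σ k).2).coeff n = 0 := by
    rw [coeff_helper]
    split_ifs with h1
    · have : n = 2 ^ k := le_antisymm hn h1
      simp [this, (PQ_coeff0 σ k).2]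
    · rfl
  simp only [PQ, Polynomial.coeff_add, Polynomial.coeff_sub, h]
  norm_num

lemma PQ_coeff_zero_high (σ : ℕ → ℤ) (k n : ℕ) (hn : 2 ^ k < n) :
    (PQ σ k).1.coeff n = 0 ∧ (PQ σ k).2.coeff n = 0 :=
  ⟨Polynomial.coeff_eq_zero_of_natDegree_lt (lt_of_le_of_lt (PQ_natDegree σ k).1 hn),
   Polynomial.coeff_eq_zero_of_natDegree_lt (lt_of_le_of_lt (PQ_natDegree σ k).2 hn)⟩

lemma PQ_coeff_high (σ : ℕ → ℤ) (k n : ℕ) (hn : 2 ^ k < n) :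
    (PQ σ (k+1)).1.coeff n = (σ k : ℂ) * (PQ σ k).2.coeff (n - 2 ^ k) ∧
    (PQ σ (k+1)).2.coeff n = -((σ k : ℂ) * (PQ σ k).2.coeff (n - 2 ^ k)) := by
  have h : (Polynomial.C ((σ k : ℂ)) * Polynomial.X ^ 2 ^ k * (PQ σ k).2).coeff n
      = (σ k : ℂ) * (PQ σ k).2.coeff (n - 2 ^ k) := by
    rw [coeff_helper, if_pos hn.le]
  simp only [PQ, Polynomial.coeff_add, Polynomial.coeff_sub, h,
    (PQ_coeff_zero_high σ k n hn).1]
  norm_num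

lemma PQ_normSq (σ : ℕ → ℤ) (hσ : ∀ k, σ k = 1 ∨ σ k = -1) (k : ℕ) (x : ℂ)
    (hx : Complex.normSq x = 1) :
    Complex.normSq ((PQ σ k).1.eval x) + Complex.normSq ((PQ σ k).2.eval x)
      = 2 ^ (k + 1) := by
  induction k with
  | zero => simp [PQ, hx]; ring
  | succ k ih =>
    have hs : Complex.normSq ((σ k : ℂ)) = 1 := by
      rcases hσ k with h | h <;> simp [h]
    have he : ((Polynomial.C ((σ k : ℂ)) * Polynomial.X ^ 2 ^ k * (PQ σ k).2)).eval x
        = (σ k : ℂ) * x ^ 2 ^ k * (PQ σ k).2.eval x := by simp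
    have hb : Complex.normSq ((σ k : ℂ) * x ^ 2 ^ k * (PQ σ k).2.eval x)
        = Complex.normSq ((PQ σ k).2.eval x) := by
      simp [Complex.normSq_mul, map_pow, hs, hx]
    show Complex.normSq (((PQ σ k).1 + _).eval x) + Complex.normSq (((PQ σ k).1 - _).eval x) = _
    rw [Polynomial.eval_add, Polynomial.eval_sub, he, Complex.normSq_add, Complex.normSq_sub, hb]
    have : (2:ℝ) ^ (k + 1 + 1) = 2 * 2 ^ (k+1) := by ring
    rw [this, ← ih]
    ring

lemma PQ_abs_le (σ : ℕ → ℤ) (hσ : ∀ k, σ k = 1 ∨ σ k = -1) (k : ℕ) (x : ℂ)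
    (hx : Complex.normSq x = 1) :
    ‖(PQ σ k).1.eval x‖ ≤ Real.sqrt (2 ^ (k + 1)) := by
  rw [Complex.norm_def]
  apply Real.sqrt_le_sqrt
  have := PQ_normSq σ hσ k x hx
  have h2 := Complex.normSq_nonneg ((PQ σ k).2.eval x)
  linarith

lemma sum_split (f : ℕ → ℂ) (a M : ℕ) (h : a ≤ M) :
    ∑ n ∈ Icc 1 M, f n = (∑ n ∈ Icc 1 a, f n) + ∑ j ∈ Icc 1 (M - a), f (a + j) := by
  have h1 : Icc 1 M = Ioc 0 M := by rw [← Finset.Icc_add_one_left_eq_Ioc, zero_add]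
  have h2 : Icc 1 a = Ioc 0 a := by rw [← Finset.Icc_add_one_left_eq_Ioc, zero_add]
  have h3 : Icc 1 (M - a) = Ioc 0 (M - a) := by rw [← Finset.Icc_add_one_left_eq_Ioc, zero_add]
  rw [h1, h2, h3, ← Finset.sum_Ioc_consecutive f (Nat.zero_le a) h]
  congr 1
  have : Ioc a M = (Ioc 0 (M - a)).map (addLeftEmbedding a) := by
    rw [Finset.map_add_left_Ioc, add_zero, Nat.add_sub_cancel' h]
  rw [this, Finset.sum_map]
  rfl

lemma PQ_sum_split (σ : ℕ → ℤ) (k M : ℕ) (hM : 2 ^ k ≤ M) (x : ℂ) :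
    (∑ n ∈ Icc 1 M, (PQ σ (k+1)).1.coeff n * x ^ n
      = (PQ σ k).1.eval x
        + (σ k : ℂ) * x ^ 2 ^ k * ∑ j ∈ Icc 1 (M - 2 ^ k), (PQ σ k).2.coeff j * x ^ j)
    ∧ (∑ n ∈ Icc 1 M, (PQ σ (k+1)).2.coeff n * x ^ n
      = (PQ σ k).1.eval x
        - (σ k : ℂ) * x ^ 2 ^ k * ∑ j ∈ Icc 1 (M - 2 ^ k), (PQ σ k).2.coeff j * x ^ j) := by
  have hfirst : ∀ p : Polynomial ℂ, (∀ n ≤ 2 ^ k, p.coeff n = (PQ σ k).1.coeff n) →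
      ∑ n ∈ Icc 1 (2 ^ k), p.coeff n * x ^ n = (PQ σ k).1.eval x := by
    intro p hp
    rw [Finset.sum_congr rfl (fun n hn => by
      rw [hp n (Finset.mem_Icc.mp hn).2])]
    exact sum_to_eval _ _ (PQ_coeff0 σ k).1 (PQ_natDegree σ k).1 x
  have htail : ∀ j ∈ Icc 1 (M - 2 ^ k),
      (PQ σ (k+1)).1.coeff (2 ^ k + j) * x ^ (2 ^ k + j)
        = (σ k : ℂ) * x ^ 2 ^ k * ((PQ σ k).2.coeff j * x ^ j) ∧
      (PQ σ (k+1)).2.coeff (2 ^ k + j) * x ^ (2 ^ k + j)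
        = -((σ k : ℂ) * x ^ 2 ^ k * ((PQ σ k).2.coeff j * x ^ j)) := by
    intro j hj
    have hj1 : 1 ≤ j := (Finset.mem_Icc.mp hj).1
    have hgt : 2 ^ k < 2 ^ k + j := by omega
    have hsub : 2 ^ k + j - 2 ^ k = j := by omega
    obtain ⟨c1, c2⟩ := PQ_coeff_high σ k (2 ^ k + j) hgt
    rw [hsub] at c1 c2
    constructor
    · rw [c1, pow_add]; ring
    · rw [c2, pow_add]; ring
  constructor
  · rw [sum_split _ (2 ^ k) M hM,
      hfirst _ (fun n hn => (PQ_coeff_low σ k n hn).1),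
      Finset.sum_congr rfl (fun j hj => (htail j hj).1), ← Finset.mul_sum]
  · rw [sum_split _ (2 ^ k) M hM,
      hfirst _ (fun n hn => (PQ_coeff_low σ k n hn).2),
      Finset.sum_congr rfl (fun j hj => (htail j hj).2), Finset.sum_neg_distrib,
      ← Finset.mul_sum]
    ring

lemma numeric (a m : ℝ) (ha : 1 ≤ a) (hm : 0 ≤ m) (hma : m ≤ a) :
    Real.sqrt (2 * a) + 2 * (1 + Real.sqrt 2) * Real.sqrt m
      ≤ 2 * (1 + Real.sqrt 2) * Real.sqrt (a + m) := by
  have h2 : (0:ℝ) ≤ 2 := by norm_num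
  set s2 := Real.sqrt 2 with hs2
  set sa := Real.sqrt a with hsa
  set sm := Real.sqrt m with hsm
  set sM := Real.sqrt (a + m) with hsM
  have hsa1 : 1 ≤ sa := by rw [hsa, show (1:ℝ) = Real.sqrt 1 by simp]; exact Real.sqrt_le_sqrt ha
  have hs2v : s2 ^ 2 = 2 := Real.sq_sqrt h2
  have hsav : sa ^ 2 = a := Real.sq_sqrt (by linarith)
  have hsmv : sm ^ 2 = m := Real.sq_sqrt hm
  have hsMv : sM ^ 2 = a + m := Real.sq_sqrt (by linarith)
  have h2a : Real.sqrt (2 * a) = s2 * sa := Real.sqrt_mul h2 a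
  have hmn : sm ≤ sM := Real.sqrt_le_sqrt (by linarith)
  have hMn : 0 ≤ sM := Real.sqrt_nonneg _
  have hmn0 : 0 ≤ sm := Real.sqrt_nonneg _
  have hs2n : 0 ≤ s2 := Real.sqrt_nonneg _
  have hs2le : s2 ≤ 2 := by nlinarith [hs2v, hs2n]
  have hMle : sM ≤ s2 * sa := by
    rw [hsM, ← h2a]; exact Real.sqrt_le_sqrt (by linarith)
  have hmle : sm ≤ sa := Real.sqrt_le_sqrt hma
  have hkey : (sM - sm) * (sM + sm) = sa ^ 2 := by nlinarith [hsMv, hsmv, hsav]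
  have hsum : sM + sm ≤ (1 + s2) * sa := by nlinarith
  rw [h2a]
  nlinarith [mul_le_mul_of_nonneg_left hsum (sub_nonneg.mpr hmn), sq_nonneg (sM - sm),
    mul_nonneg hs2n (sub_nonneg.mpr hmn), hsa1]

lemma PQ_main (σ : ℕ → ℤ) (hσ : ∀ k, σ k = 1 ∨ σ k = -1) :
    ∀ k M : ℕ, M ≤ 2 ^ k → ∀ x : ℂ, ‖x‖ = 1 →
      ‖∑ n ∈ Icc 1 M, (PQ σ k).1.coeff n * x ^ n‖
          ≤ 2 * (1 + Real.sqrt 2) * Real.sqrt M ∧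
      ‖∑ n ∈ Icc 1 M, (PQ σ k).2.coeff n * x ^ n‖
          ≤ 2 * (1 + Real.sqrt 2) * Real.sqrt M := by
  intro k
  induction k with
  | zero =>
    intro M hM x hx
    interval_cases M
    · simp
    · have : ∑ n ∈ Icc 1 1, (PQ σ 0).1.coeff n * x ^ n = x := by simp [PQ]
      have h2 : (0:ℝ) ≤ Real.sqrt 2 := Real.sqrt_nonneg _
      constructor <;> simp [this, PQ, hx] <;> nlinarith
  | succ k ih =>
    intro M hM x hx
    by_cases hMk : M ≤ 2 ^ k
    · have h1 : ∑ n ∈ Icc 1 M, (PQ σ (k+1)).1.coeff n * x ^ n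
          = ∑ n ∈ Icc 1 M, (PQ σ k).1.coeff n * x ^ n :=
        Finset.sum_congr rfl fun n hn => by
          rw [(PQ_coeff_low σ k n (le_trans (Finset.mem_Icc.mp hn).2 hMk)).1]
      have h2 : ∑ n ∈ Icc 1 M, (PQ σ (k+1)).2.coeff n * x ^ n
          = ∑ n ∈ Icc 1 M, (PQ σ k).1.coeff n * x ^ n :=
        Finset.sum_congr rfl fun n hn => by
          rw [(PQ_coeff_low σ k n (le_trans (Finset.mem_Icc.mp hn).2 hMk)).2]
      rw [h1, h2]
      exact ⟨(ih M hMk x hx).1, (ih M hMk x hx).1⟩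
    · push_neg at hMk
      have hM2 : 2 ^ k ≤ M := hMk.le
      obtain ⟨e1, e2⟩ := PQ_sum_split σ k M hM2 x
      have hnx : Complex.normSq x = 1 := by
        rw [← Complex.sq_norm, hx]; norm_num
      have hP : ‖(PQ σ k).1.eval x‖ ≤ Real.sqrt (2 ^ (k + 1)) :=
        PQ_abs_le σ hσ k x hnx
      have hT := (ih (M - 2 ^ k) (by omega) x hx).2
      have habsσ : ‖(σ k : ℂ)‖ = 1 := by
        rcases hσ k with h | h <;> simp [h]
      have habsx : ‖x ^ 2 ^ k‖ = 1 := by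
        rw [norm_pow, hx, one_pow]
      have hbound : ∀ s : ℂ, ‖s‖ ≤ Real.sqrt (2 ^ (k + 1))
            + 2 * (1 + Real.sqrt 2) * Real.sqrt (M - 2 ^ k : ℕ) →
          ‖s‖ ≤ 2 * (1 + Real.sqrt 2) * Real.sqrt M := by
        intro s hs
        refine hs.trans ?_
        have h2k : (2:ℝ) ^ (k + 1) = 2 * 2 ^ k := by ring
        have hcast : ((M - 2 ^ k : ℕ) : ℝ) = (M : ℝ) - 2 ^ k := by
          push_cast [hM2]; ring
        have hMcast : (M : ℝ) = 2 ^ k + ((M : ℝ) - 2 ^ k) := by ring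
        rw [h2k, hcast, hMcast]
        have := numeric (2 ^ k) ((M : ℝ) - 2 ^ k)
          (one_le_pow₀ (by norm_num))
          (by
            have : (2:ℝ) ^ k ≤ (M : ℝ) := by exact_mod_cast hM2
            linarith)
          (by
            have : (M : ℝ) ≤ 2 ^ (k + 1) := by exact_mod_cast hM
            have h2k' : (2:ℝ) ^ (k + 1) = 2 * 2 ^ k := by ring
            linarith)
        convert this using 3
        · rfl
        · ring
      constructor
      · apply hbound
        rw [e1]
        refine (norm_add_le _ _).trans (add_le_add hP ?_)
        rw [norm_mul, norm_mul, habsσ, habsx, one_mul, one_mul]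
        exact hT
      · apply hbound
        rw [e2, sub_eq_add_neg]
        refine (norm_add_le _ _).trans (add_le_add hP ?_)
        rw [norm_neg, norm_mul, norm_mul, habsσ, habsx, one_mul, one_mul]
        exact hT

/-- The root-N property: the sequence `ε` of coefficients of the `P_k` (which is
well defined, as `ε n` is the coefficient of `x^n` in `P_k` for any `k` with
`n ≤ 2^k`) satisfies `|∑_{n=1}^N ε_n x^n| ≤ 2(1+√2)·√N` for all `|x| = 1`. -/
theorem stmt4 (σ : ℕ → ℤ) (hσ : ∀ k, σ k = 1 ∨ σ k = -1) (ε : ℕ → ℂ)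
    (hε : ∀ n k : ℕ, 1 ≤ n → n ≤ 2 ^ k → ε n = (PQ σ k).1.coeff n) :
    ∀ N : ℕ, 1 ≤ N → ∀ x : ℂ, ‖x‖ = 1 →
      ‖∑ n ∈ Finset.Icc 1 N, ε n * x ^ n‖
        ≤ 2 * (1 + Real.sqrt 2) * Real.sqrt N := by
  intro N hN x hx
  have hN2 : N ≤ 2 ^ N := Nat.le_of_lt (Nat.lt_two_pow_self (n := N))
  have h : ∑ n ∈ Finset.Icc 1 N, ε n * x ^ n
      = ∑ n ∈ Finset.Icc 1 N, (PQ σ N).1.coeff n * x ^ n :=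
    Finset.sum_congr rfl fun n hn => by
      obtain ⟨h1, h2⟩ := Finset.mem_Icc.mp hn
      rw [hε n N h1 (h2.trans hN2)]
  rw [h]
  exact (PQ_main σ hσ N N hN2 x hx).1
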